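/- Let S be a resolving set of a connected graph G. Then for each vertex v ∈ S and each integer d ≥ 1, the number of vertices of G at distance at most d from v is at most 1 + d·(2d+1)^{|S|−1}. -/

import Mathlib

open SimpleGraph Function
open scoped Classical

/-- A set `S` is a resolving set of `G`: every pair of distinct vertices differ in
distance to some element of `S`. -/
def IsResolving {V : Type*} (G : SimpleGraph V) (S : Set V) : Prop :=
  ∀ x y : V, x ≠ y → ∃ s ∈ S, G.dist s x ≠ G.dist s y

/-- A fault-tolerant resolving set: removing any single vertex leaves a resolving set. -/
def IsFTResolving {V : Type*} (G : SimpleGraph V) (S : Set V) : Prop :=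
  ∀ s ∈ S, IsResolving G (S \ {s})

/-- The metric dimension of `G`. -/
noncomputable def metricDim {V : Type*} [Fintype V] (G : SimpleGraph V) : ℕ :=
  sInf {n | ∃ S : Finset V, IsResolving G ↑S ∧ S.card = n}

/-- The fault-tolerant metric dimension of `G`. -/
noncomputable def ftDim {V : Type*} [Fintype V] (G : SimpleGraph V) : ℕ :=
  sInf {n | ∃ S : Finset V, IsFTResolving G ↑S ∧ S.card = n}

/-- `S` is a `k`-resolving set: every pair of distinct vertices is distinguished
by at least `k` vertices of `S`. -/
def IsKResolving {V : Type*} [Fintype V] (G : SimpleGraph V) (k : ℕ) (S : Finset V) : Prop :=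
  ∀ x y : V, x ≠ y → k ≤ (S.filter (fun s => G.dist s x ≠ G.dist s y)).card

/-- The `k`-metric dimension of `G`. -/
noncomputable def kMetricDim {V : Type*} [Fintype V] (G : SimpleGraph V) (k : ℕ) : ℕ :=
  sInf {n | ∃ S : Finset V, IsKResolving G k S ∧ S.card = n}

theorem stmt15 {V : Type*} [Fintype V] (G : SimpleGraph V) (hG : G.Connected)
    (S : Finset V) (hS : IsResolving G ↑S) (v : V) (hv : v ∈ S)
    (d : ℕ) (hd : 1 ≤ d) :
    (Finset.univ.filter (fun u : V => G.dist v u ≤ d)).card ≤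
      1 + d * (2 * d + 1) ^ (S.card - 1) := by
  classical
  set B := Finset.univ.filter (fun u : V => G.dist v u ≤ d) with hB
  have hvB : v ∈ B := by simp [hB, SimpleGraph.dist_self]
  have hcard : B.card = (B.erase v).card + 1 := (Finset.card_erase_add_one hvB).symm
  -- target finset
  set T := (Finset.Icc 1 d) ×ˢ ((S.erase v).pi (fun _ => Finset.range (2 * d + 1))) with hT
  have tri : ∀ (s u : V), u ∈ B → G.dist s v ≤ G.dist s u + d := by
    intro s u hu
    have h1 : G.dist s v ≤ G.dist s u + G.dist u v := hG.dist_triangle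
    have h2 : G.dist u v ≤ d := by
      rw [SimpleGraph.dist_comm]; simpa [hB] using hu
    omega
  have tri' : ∀ (s u : V), u ∈ B → G.dist s u ≤ G.dist s v + d := by
    intro s u hu
    have h1 : G.dist s u ≤ G.dist s v + G.dist v u := hG.dist_triangle
    have h2 : G.dist v u ≤ d := by simpa [hB] using hu
    omega
  have hinj : ∀ u ∈ B.erase v,
      (⟨G.dist v u, fun s _ => G.dist s u + d - G.dist s v⟩ :
        ℕ × (∀ s ∈ S.erase v, ℕ)) ∈ T ∧ True := by
    intro u hu; constructor; swap; · trivial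
    have huB : u ∈ B := Finset.mem_of_mem_erase hu
    have hune : u ≠ v := Finset.ne_of_mem_erase hu
    rw [hT, Finset.mem_product]
    constructor
    · rw [Finset.mem_Icc]
      refine ⟨hG.pos_dist_of_ne (Ne.symm hune), by simpa [hB] using huB⟩
    · rw [Finset.mem_pi]
      intro s hs
      rw [Finset.mem_range]
      show G.dist s u + d - G.dist s v < 2 * d + 1
      have := tri' s u huB
      omega
  have hle : (B.erase v).card ≤ T.card := by
    apply Finset.card_le_card_of_injOn
      (fun u => (⟨G.dist v u, fun s _ => G.dist s u + d - G.dist s v⟩ :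
        ℕ × (∀ s ∈ S.erase v, ℕ)))
    · intro u hu; exact (hinj u hu).1
    · intro u1 h1 u2 h2 heq
      by_contra hne
      obtain ⟨s, hsS, hsd⟩ := hS u1 u2 hne
      have e1 := congrArg Prod.fst heq
      have e2 := congrArg Prod.snd heq
      simp only at e1 e2
      rcases eq_or_ne s v with rfl | hsv
      · exact hsd e1
      · have hs' : s ∈ S.erase v := Finset.mem_erase.mpr ⟨hsv, hsS⟩
        have := congrFun (congrFun e2 s) hs'
        have t1 := tri s u1 (Finset.mem_of_mem_erase h1)
        have t2 := tri s u2 (Finset.mem_of_mem_erase h2)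
        omega
  have hTcard : T.card = d * (2 * d + 1) ^ (S.card - 1) := by
    rw [hT, Finset.card_product, Finset.card_pi, Nat.card_Icc]
    simp [Finset.prod_const, Finset.card_erase_of_mem hv]
  omega
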